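/- Let d ≥ 3, N ≥ 2 be integers and let F = x₁^{d-1}x₂ + x₂^{d-1}x₃ + ⋯ + x_N^{d-1}x₁ be the Klein polynomial. If λ₁,…,λ_N ∈ ℂ^× satisfy F(λ₁x₁,…,λ_Nx_N) = F(x₁,…,x_N) identically, then λ_i = λ₁^{(1-d)^{i-1}} for all i, and λ₁^{1-(1-d)^N} = 1; in particular λ₁ is a root of unity of order dividing |1-(1-d)^N|. -/
import Mathlib


open MvPolynomial Finset

/-- Diagonal symmetries of the Klein polynomial: if `λ₁,…,λ_N ∈ ℂˣ` preserve
`F = x₁^{d-1}x₂ + ⋯ + x_N^{d-1}x₁`, then `λ_i = λ₁^{(1-d)^{i-1}}` and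
`λ₁^{1-(1-d)^N} = 1`. -/
theorem stmt_8 (d N : ℕ) (hd : 3 ≤ d) (hN : 2 ≤ N)
    (F : MvPolynomial (Fin N) ℂ)
    (hF : F = ∑ i : Fin N,
      X i ^ (d - 1) * X (⟨(i.val + 1) % N, Nat.mod_lt _ (by omega)⟩ : Fin N))
    (lam : Fin N → ℂ) (hlam : ∀ i, lam i ≠ 0)
    (hinv : ∀ x : Fin N → ℂ, eval (fun j : Fin N => lam j * x j) F = eval x F) :
    (∀ i : Fin N, lam i = (lam (⟨0, by omega⟩ : Fin N)) ^ ((1 - (d : ℤ)) ^ (i : ℕ))) ∧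
    (lam (⟨0, by omega⟩ : Fin N)) ^ ((1 : ℤ) - (1 - (d : ℤ)) ^ N) = 1 := by
  have hNpos : 0 < N := by omega
  set s : Fin N → Fin N := fun a => ⟨(a.val + 1) % N, Nat.mod_lt _ hNpos⟩ with hs
  have hF' : F = ∑ i : Fin N, X i ^ (d - 1) * X (s i) := hF
  have hsne : ∀ a : Fin N, s a ≠ a := by
    intro a h
    have hv : (a.val + 1) % N = a.val := congrArg Fin.val h
    have ha := a.isLt
    rcases Nat.lt_or_ge (a.val + 1) N with h1 | h1
    · rw [Nat.mod_eq_of_lt h1] at hv; omega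
    · have : a.val + 1 = N := by omega
      rw [this, Nat.mod_self] at hv; omega
  have hpoly : bind₁ (fun j : Fin N => C (lam j) * X j) F = F := by
    apply MvPolynomial.funext
    intro x
    rw [show (eval x (bind₁ (fun j : Fin N => C (lam j) * X j) F))
        = eval (fun i => eval x (C (lam i) * X i)) F from aeval_bind₁ x _ F]
    simp only [eval_mul, eval_C, eval_X]
    exact hinv x
  have hmono : ∀ i : Fin N, (X i ^ (d-1) * X (s i) : MvPolynomial (Fin N) ℂ)
      = monomial (Finsupp.single i (d-1) + Finsupp.single (s i) 1) 1 := by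
    intro i
    rw [X_pow_eq_monomial, X, monomial_mul, one_mul]
  have key : ∀ a : Fin N, lam a ^ (d-1) * lam (s a) = 1 := by
    intro a
    have hinj : ∀ i : Fin N,
        (Finsupp.single i (d-1) + Finsupp.single (s i) 1
          = Finsupp.single a (d-1) + Finsupp.single (s a) 1) ↔ i = a := by
      intro i
      constructor
      · intro h
        have h1 := DFunLike.congr_fun h i
        simp only [Finsupp.add_apply, Finsupp.single_apply] at h1
        have hi := hsne i
        by_contra hne
        have h2 : ¬ (s i = i) := hi
        have h3 : ¬ (a = i) := fun h' => hne h'.symm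
        split_ifs at h1 <;> omega
      · rintro rfl; rfl
    have hsum : ∀ c : Fin N → ℂ,
        coeff (Finsupp.single a (d-1) + Finsupp.single (s a) 1)
          (∑ i : Fin N, monomial (Finsupp.single i (d-1) + Finsupp.single (s i) 1) (c i))
        = c a := by
      intro c
      rw [coeff_sum]
      simp only [coeff_monomial, hinj, Finset.sum_ite_eq', Finset.mem_univ, if_true]
    have hco := congrArg (coeff (Finsupp.single a (d-1) + Finsupp.single (s a) 1)) hpoly
    rw [hF'] at hco
    have hterm : ∀ i : Fin N, bind₁ (fun j : Fin N => C (lam j) * X j)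
        (X i ^ (d - 1) * X (s i))
        = monomial (Finsupp.single i (d-1) + Finsupp.single (s i) 1)
            (lam i ^ (d-1) * lam (s i)) := by
      intro i
      rw [map_mul, map_pow, bind₁_X_right, bind₁_X_right, mul_pow, ← C_pow,
        mul_mul_mul_comm, ← C_mul, hmono i, C_mul_monomial, mul_one]
    rw [map_sum] at hco
    simp only [hterm] at hco
    simp only [hmono] at hco
    rw [hsum, hsum] at hco
    exact hco
  -- step : lam (s a) = lam a ^ (1 - d : ℤ)
  have step : ∀ a : Fin N, lam (s a) = lam a ^ ((1 : ℤ) - d) := by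
    intro a
    have h := key a
    have h2 : lam (s a) = (lam a ^ (d - 1))⁻¹ := eq_inv_of_mul_eq_one_right h
    rw [show ((1 : ℤ) - d) = -(((d - 1 : ℕ) : ℤ)) by push_cast; omega, zpow_neg,
      zpow_natCast]
    exact h2
  set l0 : ℂ := lam (⟨0, hNpos⟩ : Fin N) with hl0
  have hl0ne : l0 ≠ 0 := hlam _
  -- main induction
  have main : ∀ k : ℕ, ∀ hk : k < N, lam ⟨k, hk⟩ = l0 ^ ((1 - (d:ℤ)) ^ k) := by
    intro k
    induction k with
    | zero => intro hk; simp [hl0]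
    | succ n ih =>
      intro hk
      have hn : n < N := by omega
      have hsn : s ⟨n, hn⟩ = ⟨n + 1, hk⟩ := by
        apply Fin.ext
        simp [hs, Nat.mod_eq_of_lt hk]
      rw [← hsn, step, ih hn, ← zpow_mul, ← pow_succ]
  constructor
  · intro i
    have := main i.val i.isLt
    simpa using this
  · obtain ⟨m, rfl⟩ : ∃ m, N = m + 1 := ⟨N - 1, by omega⟩
    have hm : m < m + 1 := by omega
    have hsN : s ⟨m, hm⟩ = ⟨0, hNpos⟩ := Fin.ext (by simp [hs])
    have h := key ⟨m, hm⟩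
    rw [hsN, main m hm] at h
    have hcast : ((d - 1 : ℕ) : ℤ) = (d : ℤ) - 1 := by push_cast; omega
    rw [← zpow_natCast (l0 ^ ((1 - (d:ℤ)) ^ m)) (d-1), ← zpow_mul, hcast] at h
    have h2 : l0 ^ ((1 - (d:ℤ)) ^ m * ((d:ℤ) - 1) + 1) = 1 := by
      rw [zpow_add₀ hl0ne, zpow_one]; exact h
    rw [show (1:ℤ) - (1 - (d:ℤ)) ^ (m+1) = (1 - (d:ℤ)) ^ m * ((d:ℤ) - 1) + 1 from by
      rw [pow_succ]; ring]
    exact h2
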